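/- Suppose the automaton ℳ is alive. Then for every k ≥ 1, the maximum of the block norms of the lifted products over all words of length k equals the maximum of ‖A_σ‖ over all accepted words of length k: max_{σ∈[m]^k} ⦀Φ_σ⦀ = max{‖A_σ‖ : σ ∈ [m]^k, F_σ ≠ 0}. -/

import Mathlib

open Matrix Filter Kronecker

noncomputable section

/-- The product `A_{σ_{k-1}} ⋯ A_{σ_0}` for a word `σ = σ_0 … σ_{k-1}`. -/
def wordProd {m : ℕ} {N : Type*} [Fintype N] [DecidableEq N]
    (A : Fin m → Matrix N N ℝ) {k : ℕ} (σ : Fin k → Fin m) : Matrix N N ℝ :=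
  ((List.ofFn fun i => A (σ i)).reverse).prod

/-- The spectral radius: maximal modulus of a complex eigenvalue. -/
def specRad {N : Type*} [Fintype N] [DecidableEq N] (A : Matrix N N ℝ) : ℝ :=
  ⨆ μ ∈ ((A.map (Complex.ofReal ·)).charpoly.roots).toFinset, ‖μ‖

/-- `ν` is a sub-multiplicative matrix norm. -/
def IsSubmultNorm {N : Type*} [Fintype N] [DecidableEq N]
    (ν : Matrix N N ℝ → ℝ) : Prop :=
  (∀ S, 0 ≤ ν S) ∧ (∀ S, ν S = 0 ↔ S = 0) ∧
  (∀ (c : ℝ) (S), ν (c • S) = |c| * ν S) ∧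
  (∀ S T, ν (S + T) ≤ ν S + ν T) ∧
  (∀ S T, ν (S * T) ≤ ν S * ν T)

/-- Joint spectral radius. -/
def JSR {m : ℕ} {N : Type*} [Fintype N] [DecidableEq N]
    (ν : Matrix N N ℝ → ℝ) (A : Fin m → Matrix N N ℝ) : ℝ :=
  Filter.limsup
    (fun k : ℕ => (⨆ σ : Fin k → Fin m, ν (wordProd A σ)) ^ ((k : ℝ)⁻¹)) Filter.atTop

/-- Generalized spectral radius. -/
def GSR {m : ℕ} {N : Type*} [Fintype N] [DecidableEq N]
    (A : Fin m → Matrix N N ℝ) : ℝ :=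
  Filter.limsup
    (fun k : ℕ => (⨆ σ : Fin k → Fin m, specRad (wordProd A σ)) ^ ((k : ℝ)⁻¹)) Filter.atTop

/-- Constrained joint spectral radius. -/
def CJSR {n m ℓ : ℕ} (ν : Matrix (Fin n) (Fin n) ℝ → ℝ)
    (A : Fin m → Matrix (Fin n) (Fin n) ℝ)
    (F : Fin m → Matrix (Fin ℓ) (Fin ℓ) ℝ) : ℝ :=
  Filter.limsup
    (fun k : ℕ =>
      (⨆ σ : {σ : Fin k → Fin m // wordProd F σ ≠ 0}, ν (wordProd A σ.1)) ^ ((k : ℝ)⁻¹))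
    Filter.atTop

/-- Constrained generalized spectral radius. -/
def CGSR {n m ℓ : ℕ}
    (A : Fin m → Matrix (Fin n) (Fin n) ℝ)
    (F : Fin m → Matrix (Fin ℓ) (Fin ℓ) ℝ) : ℝ :=
  Filter.limsup
    (fun k : ℕ =>
      (⨆ σ : {σ : Fin k → Fin m // wordProd F σ ≠ 0}, specRad (wordProd A σ.1)) ^ ((k : ℝ)⁻¹))
    Filter.atTop

/-- The block norm `⦀S⦀ = max_j Σ_i ‖S_{ij}‖`. -/
def blockNorm {n ℓ : ℕ} (ν : Matrix (Fin n) (Fin n) ℝ → ℝ)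
    (S : Matrix (Fin ℓ × Fin n) (Fin ℓ × Fin n) ℝ) : ℝ :=
  ⨆ j : Fin ℓ, ∑ i : Fin ℓ, ν (Matrix.of fun a b => S (i, a) (j, b))

/-- Each column of `G` is either zero or a standard basis vector. -/
def Qcol {ℓ : ℕ} (G : Matrix (Fin ℓ) (Fin ℓ) ℝ) : Prop :=
  ∀ t, (∀ s, G s t = 0) ∨ ∃ s, G s t = 1 ∧ ∀ s', s' ≠ s → G s' t = 0

lemma Qcol_entry {ℓ : ℕ} {G : Matrix (Fin ℓ) (Fin ℓ) ℝ} (hG : Qcol G) (s t : Fin ℓ) :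
    G s t = 0 ∨ G s t = 1 := by
  rcases hG t with h | ⟨s₀, h1, h0⟩
  · exact Or.inl (h s)
  · by_cases hs : s = s₀
    · exact Or.inr (hs ▸ h1)
    · exact Or.inl (h0 s hs)

lemma Qcol_one {ℓ : ℕ} : Qcol (1 : Matrix (Fin ℓ) (Fin ℓ) ℝ) := by
  intro t
  refine Or.inr ⟨t, ?_, ?_⟩
  · simp
  · intro s' hs'; simp [Matrix.one_apply, hs']

lemma Qcol_mul {ℓ : ℕ} {G H : Matrix (Fin ℓ) (Fin ℓ) ℝ} (hG : Qcol G) (hH : Qcol H) :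
    Qcol (G * H) := by
  intro t
  rcases hH t with h | ⟨r, h1, h0⟩
  · refine Or.inl fun s => ?_
    simp [Matrix.mul_apply, fun x => h x]
  · have key : ∀ s, (G * H) s t = G s r := by
      intro s
      rw [Matrix.mul_apply]
      rw [Finset.sum_eq_single r]
      · rw [h1, mul_one]
      · intro b _ hb; rw [h0 b hb, mul_zero]
      · intro hb; exact absurd (Finset.mem_univ r) hb
    rcases hG r with h' | ⟨s₀, h1', h0'⟩
    · exact Or.inl fun s => (key s).trans (h' s)
    · exact Or.inr ⟨s₀, (key s₀).trans h1', fun s' hs' => (key s').trans (h0' s' hs')⟩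

lemma Qcol_listProd {ℓ : ℕ} (L : List (Matrix (Fin ℓ) (Fin ℓ) ℝ))
    (h : ∀ G ∈ L, Qcol G) : Qcol L.prod := by
  induction L with
  | nil => simpa using Qcol_one
  | cons a L ih =>
    rw [List.prod_cons]
    exact Qcol_mul (h a (by simp)) (ih fun G hG => h G (by simp [hG]))

lemma Qcol_wordProd {m ℓ : ℕ} (F : Fin m → Matrix (Fin ℓ) (Fin ℓ) ℝ)
    (hF01 : ∀ i s t, F i s t = 0 ∨ F i s t = 1)
    (hFcol : ∀ i t s s', F i s t ≠ 0 → F i s' t ≠ 0 → s = s')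
    {k : ℕ} (σ : Fin k → Fin m) : Qcol (wordProd F σ) := by
  have hQF : ∀ i, Qcol (F i) := by
    intro i t
    by_cases h : ∀ s, F i s t = 0
    · exact Or.inl h
    · push_neg at h
      obtain ⟨s, hs⟩ := h
      refine Or.inr ⟨s, (hF01 i s t).resolve_left hs, fun s' hs' => ?_⟩
      by_contra h'
      exact hs' (hFcol i t s' s h' hs)
  refine Qcol_listProd _ fun G hG => ?_
  rw [List.mem_reverse, List.mem_ofFn] at hG
  obtain ⟨i, rfl⟩ := hG
  exact hQF _

lemma wordProd_kron {n m ℓ : ℕ} (A : Fin m → Matrix (Fin n) (Fin n) ℝ)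
    (F : Fin m → Matrix (Fin ℓ) (Fin ℓ) ℝ) {k : ℕ} (σ : Fin k → Fin m) :
    wordProd (fun i => F i ⊗ₖ A i) σ = wordProd F σ ⊗ₖ wordProd A σ := by
  have main : ∀ L : List (Fin m),
      ((L.map fun i => F i ⊗ₖ A i)).prod = (L.map F).prod ⊗ₖ (L.map A).prod := by
    intro L
    induction L with
    | nil => simp [Matrix.one_kronecker_one]
    | cons a L ih =>
      simp only [List.map_cons, List.prod_cons, ih, Matrix.mul_kronecker_mul]
  unfold wordProd
  rw [show (List.ofFn fun i => (fun i => F i ⊗ₖ A i) (σ i)) = (List.ofFn σ).map (fun i => F i ⊗ₖ A i) by rw [List.map_ofFn]; rfl,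
    show (List.ofFn fun i => F (σ i)) = (List.ofFn σ).map F by rw [List.map_ofFn]; rfl,
    show (List.ofFn fun i => A (σ i)) = (List.ofFn σ).map A by rw [List.map_ofFn]; rfl,
    ← List.map_reverse, ← List.map_reverse, ← List.map_reverse, main]

lemma wordProd_snoc {m : ℕ} {N : Type*} [Fintype N] [DecidableEq N]
    (A : Fin m → Matrix N N ℝ) {k : ℕ} (σ : Fin k → Fin m) (i : Fin m) :
    wordProd A (Fin.snoc σ i) = A i * wordProd A σ := by
  unfold wordProd
  rw [List.ofFn_succ']
  simp [List.reverse_concat, Fin.snoc_last, Fin.snoc_castSucc]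


lemma exists_nonzero_word {m ℓ : ℕ} (F : Fin m → Matrix (Fin ℓ) (Fin ℓ) ℝ)
    (hF01 : ∀ i s t, F i s t = 0 ∨ F i s t = 1)
    (hFcol : ∀ i t s s', F i s t ≠ 0 → F i s' t ≠ 0 → s = s')
    (halive : ∀ t : Fin ℓ, ∃ i : Fin m, ∃ s : Fin ℓ, F i s t ≠ 0) :
    ∀ (k : ℕ) (t : Fin ℓ), ∃ σ : Fin k → Fin m, ∃ s, wordProd F σ s t ≠ 0 := by
  intro k
  induction k with
  | zero =>
    intro t
    refine ⟨fun i => i.elim0, t, ?_⟩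
    simp [wordProd, Matrix.one_apply]
  | succ k ih =>
    intro t
    obtain ⟨σ, s, hs⟩ := ih t
    obtain ⟨i, s', hs'⟩ := halive s
    refine ⟨Fin.snoc σ i, s', ?_⟩
    rw [wordProd_snoc]
    have hW := Qcol_wordProd F hF01 hFcol σ
    have hWnn : ∀ a b, 0 ≤ wordProd F σ a b := fun a b => by
      rcases Qcol_entry hW a b with h | h <;> simp [h]
    have hFnn : ∀ a b, 0 ≤ F i a b := fun a b => by
      rcases hF01 i a b with h | h <;> simp [h]
    have h1 : F i s' s * wordProd F σ s t = 1 := by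
      rw [(hF01 i s' s).resolve_left hs', (Qcol_entry hW s t).resolve_left hs, mul_one]
    have hpos : (0:ℝ) < (F i * wordProd F σ) s' t := by
      rw [Matrix.mul_apply]
      have := Finset.single_le_sum (f := fun r => F i s' r * wordProd F σ r t)
        (fun r _ => mul_nonneg (hFnn _ _) (hWnn _ _)) (Finset.mem_univ s)
      rw [h1] at this
      linarith
    exact hpos.ne'

lemma blockNorm_kron {n ℓ : ℕ} (hℓ : 0 < ℓ) (ν : Matrix (Fin n) (Fin n) ℝ → ℝ)
    (hν : IsSubmultNorm ν) (G : Matrix (Fin ℓ) (Fin ℓ) ℝ) (hG : Qcol G)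
    (B : Matrix (Fin n) (Fin n) ℝ) :
    blockNorm ν (G ⊗ₖ B) = if G = 0 then 0 else ν B := by
  haveI : Nonempty (Fin ℓ) := ⟨⟨0, hℓ⟩⟩
  have hterm : ∀ j, (∑ i, ν (Matrix.of fun a b => (G ⊗ₖ B) (i,a) (j,b)))
      = (∑ i, |G i j|) * ν B := by
    intro j
    rw [Finset.sum_mul]
    refine Finset.sum_congr rfl fun i _ => ?_
    have : (Matrix.of fun a b => (G ⊗ₖ B) (i,a) (j,b)) = G i j • B := by
      ext a b
      simp [Matrix.kronecker_apply, Matrix.smul_apply, smul_eq_mul]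
    rw [this, hν.2.2.1]
  unfold blockNorm
  by_cases hzero : G = 0
  · subst hzero
    rw [if_pos rfl]
    have : ∀ j : Fin ℓ, (∑ i : Fin ℓ, ν (Matrix.of fun a b =>
        ((0 : Matrix (Fin ℓ) (Fin ℓ) ℝ) ⊗ₖ B) (i,a) (j,b))) = 0 := by
      intro j
      rw [hterm]
      simp
    simp only [this, ciSup_const]
  · rw [if_neg hzero]
    have hνB : 0 ≤ ν B := hν.1 B
    have hcases : ∀ j, (∑ i, |G i j|) = 0 ∨ (∑ i, |G i j|) = 1 := by
      intro j
      rcases hG j with h | ⟨s₀, h1, h0⟩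
      · left; simp [h]
      · right
        rw [Finset.sum_eq_single s₀]
        · rw [h1]; norm_num
        · intro b _ hb; rw [h0 b hb]; norm_num
        · intro hb; exact absurd (Finset.mem_univ s₀) hb
    obtain ⟨s, t, hst⟩ : ∃ s t, G s t ≠ 0 := by
      by_contra h
      push_neg at h
      exact hzero (by ext a b; simp [h a b])
    have hsum1 : (∑ i, |G i t|) = 1 := by
      rcases hcases t with h | h
      · exfalso
        have : |G s t| = 0 := by
          have := Finset.sum_eq_zero_iff_of_nonneg
            (fun i (_ : i ∈ Finset.univ) => abs_nonneg (G i t)) |>.mp h s (Finset.mem_univ s)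
        
          exact this
        exact hst (abs_eq_zero.mp this)
      · exact h
    apply le_antisymm
    · refine ciSup_le fun j => ?_
      rw [hterm]
      rcases hcases j with h | h <;> rw [h] <;> simp [hνB]
    · have := le_ciSup (f := fun j : Fin ℓ => ∑ i : Fin ℓ,
        ν (Matrix.of fun a b => (G ⊗ₖ B) (i,a) (j,b)))
        (Set.Finite.bddAbove (Set.finite_range _)) t
      rwa [hterm, hsum1, one_mul] at this

theorem stmt8    {n m ℓ : ℕ} (hn : 0 < n) (hm : 0 < m) (hℓ : 0 < ℓ)
    (A : Fin m → Matrix (Fin n) (Fin n) ℝ)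
    (ν : Matrix (Fin n) (Fin n) ℝ → ℝ) (hν : IsSubmultNorm ν)
    (F : Fin m → Matrix (Fin ℓ) (Fin ℓ) ℝ)
    (hF01 : ∀ i s t, F i s t = 0 ∨ F i s t = 1)
    (hFcol : ∀ i t s s', F i s t ≠ 0 → F i s' t ≠ 0 → s = s')
    (halive : ∀ t : Fin ℓ, ∃ i : Fin m, ∃ s : Fin ℓ, F i s t ≠ 0)
    {k : ℕ} (hk : 1 ≤ k) :
    (⨆ σ : Fin k → Fin m, blockNorm ν (wordProd (fun i => F i ⊗ₖ A i) σ)) =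
      ⨆ σ : {σ : Fin k → Fin m // wordProd F σ ≠ 0}, ν (wordProd A σ.1) := by
  obtain ⟨σ0, s0, hσ0⟩ := exists_nonzero_word F hF01 hFcol halive k ⟨0, hℓ⟩
  have hσ0' : wordProd F σ0 ≠ 0 := fun h => hσ0 (by simp [h])
  haveI : Nonempty {σ : Fin k → Fin m // wordProd F σ ≠ 0} := ⟨⟨σ0, hσ0'⟩⟩
  haveI : Nonempty (Fin m) := ⟨⟨0, hm⟩⟩
  have hbn : ∀ σ : Fin k → Fin m,
      blockNorm ν (wordProd (fun i => F i ⊗ₖ A i) σ)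
        = if wordProd F σ = 0 then 0 else ν (wordProd A σ) := by
    intro σ
    rw [wordProd_kron, blockNorm_kron hℓ ν hν _ (Qcol_wordProd F hF01 hFcol σ)]
  have hbdd1 : BddAbove (Set.range fun σ : Fin k → Fin m =>
      blockNorm ν (wordProd (fun i => F i ⊗ₖ A i) σ)) :=
    Set.Finite.bddAbove (Set.finite_range _)
  have hbdd2 : BddAbove (Set.range fun σ : {σ : Fin k → Fin m // wordProd F σ ≠ 0} =>
      ν (wordProd A σ.1)) :=
    Set.Finite.bddAbove (Set.finite_range _)
  apply le_antisymm
  · refine ciSup_le fun σ => ?_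
    rw [hbn]
    by_cases h : wordProd F σ = 0
    · rw [if_pos h]
      calc (0:ℝ) ≤ ν (wordProd A σ0) := hν.1 _
        _ ≤ _ := le_ciSup hbdd2 ⟨σ0, hσ0'⟩
    · rw [if_neg h]
      exact le_ciSup hbdd2 ⟨σ, h⟩
  · refine ciSup_le fun σ => ?_
    have h := le_ciSup hbdd1 σ.1
    rw [hbn, if_neg σ.2] at h
    exact h

end
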